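/- Let τ ≤ T, t0, t1 real with t + t0 > 0 and t + t1 > 0 on [τ, T], and let h, R, V, c, h_bl : [τ, T] → ℝ be continuous with h(t) > 0, V(t) > 0 on [τ, T], and h differentiable with h'(t) = −(2/(t+t0))·(h(t) − h_bl(t)). Suppose Y : [τ, T] → ℝ is differentiable and satisfies the differential inequality Y'(t) + (Y(t)/(t+t0))·(1 − h_bl(t)/h(t)) + (4π·R(t)·h(t)·c(t)/V(t))·Y(t) ≤ 0 on [τ, T]. Then for all t ∈ [τ, T], Y(t)/√(h(t)) ≤ (Y(τ)/√(h(τ)))·exp( −∫_τ^t 4π·R(s)·h(s)·c(s)/V(s) ds ). -/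

import Mathlib

open Real

/-- A Gronwall-type inequality: if `h' = −(2/(t+t0))·(h − h_bl)` with
`h > 0`, `V > 0` on `[τ, T]`, and `Y` satisfies the differential inequality
`Y' + (Y/(t+t0))·(1 − h_bl/h) + (4πRhc/V)·Y ≤ 0`, then
`Y(t)/√(h(t)) ≤ (Y(τ)/√(h(τ)))·exp(−∫_τ^t 4πRhc/V ds)` on `[τ, T]`. -/
theorem gronwall_Y_inequality
    (t0 t1 τ T : ℝ) (hτT : τ ≤ T)
    (hpos : ∀ t ∈ Set.Icc τ T, t + t0 > 0 ∧ t + t1 > 0)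
    (h R V c h_bl : ℝ → ℝ)
    (hhc : ContinuousOn h (Set.Icc τ T)) (hRc : ContinuousOn R (Set.Icc τ T))
    (hVc : ContinuousOn V (Set.Icc τ T)) (hcc : ContinuousOn c (Set.Icc τ T))
    (hblc : ContinuousOn h_bl (Set.Icc τ T))
    (hhpos : ∀ t ∈ Set.Icc τ T, h t > 0) (hVpos : ∀ t ∈ Set.Icc τ T, V t > 0)
    (hh : ∀ t ∈ Set.Icc τ T,
      HasDerivAt h (-(2 / (t + t0)) * (h t - h_bl t)) t)
    (Y Y' : ℝ → ℝ)
    (hY : ∀ t ∈ Set.Icc τ T, HasDerivAt Y (Y' t) t)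
    (hineq : ∀ t ∈ Set.Icc τ T,
      Y' t + (Y t / (t + t0)) * (1 - h_bl t / h t)
          + (4 * π * R t * h t * c t / V t) * Y t ≤ 0) :
    ∀ t ∈ Set.Icc τ T,
      Y t / Real.sqrt (h t)
        ≤ (Y τ / Real.sqrt (h τ))
            * Real.exp (-∫ s in τ..t, 4 * π * R s * h s * c s / V s) := by
  set g : ℝ → ℝ := fun s => 4 * π * R s * h s * c s / V s with hgdef
  have hgc : ContinuousOn g (Set.Icc τ T) := by
    exact (((continuousOn_const.mul hRc).mul hhc).mul hcc).div hVc
      (fun s hs => (hVpos s hs).ne')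
  set I : ℝ → ℝ := fun x => ∫ s in τ..x, g s with hIdef
  have huIcc : Set.uIcc τ T = Set.Icc τ T := Set.uIcc_of_le hτT
  have hgint : IntervalIntegrable g MeasureTheory.volume τ T :=
    (huIcc ▸ hgc).intervalIntegrable
  have hIc : ContinuousOn I (Set.Icc τ T) := by
    have := intervalIntegral.continuousOn_primitive_interval'
      (μ := MeasureTheory.volume) (f := g) hgint
      (a := τ) (by rw [huIcc]; exact Set.left_mem_Icc.2 hτT)
    rwa [huIcc] at this
  set F : ℝ → ℝ := fun x => Y x / Real.sqrt (h x) * Real.exp (I x) with hFdef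
  have hScont : ContinuousOn (fun x => Real.sqrt (h x)) (Set.Icc τ T) :=
    hhc.sqrt
  have hYcont : ContinuousOn Y (Set.Icc τ T) := fun x hx =>
    (hY x hx).continuousAt.continuousWithinAt
  have hFc : ContinuousOn F (Set.Icc τ T) :=
    (hYcont.div hScont (fun x hx =>
      (Real.sqrt_pos.2 (hhpos x hx)).ne')).mul hIc.rexp
  -- derivative at interior points
  have key : ∀ x ∈ interior (Set.Icc τ T),
      HasDerivAt F
        ((Y' x * Real.sqrt (h x) -
            Y x * ((-(2 / (x + t0)) * (h x - h_bl x)) / (2 * Real.sqrt (h x)))) /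
          (Real.sqrt (h x)) ^ 2 * Real.exp (I x)
          + Y x / Real.sqrt (h x) * (Real.exp (I x) * g x)) x := by
    intro x hx
    rw [interior_Icc] at hx
    have hxI : x ∈ Set.Icc τ T := Set.Ioo_subset_Icc_self hx
    have hSne : Real.sqrt (h x) ≠ 0 := (Real.sqrt_pos.2 (hhpos x hxI)).ne'
    have hS : HasDerivAt (fun y => Real.sqrt (h y))
        ((-(2 / (x + t0)) * (h x - h_bl x)) / (2 * Real.sqrt (h x))) x :=
      (hh x hxI).sqrt (hhpos x hxI).ne'
    have hquot := (hY x hxI).div hS hSne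
    have hnhds : Set.Icc τ T ∈ nhds x := Icc_mem_nhds hx.1 hx.2
    have hI : HasDerivAt I (g x) x := by
      have hsub : Set.uIcc τ x ⊆ Set.Icc τ T := by
        rw [Set.uIcc_of_le hxI.1]
        exact Set.Icc_subset_Icc le_rfl hxI.2
      exact intervalIntegral.integral_hasDerivAt_right
        ((hgc.mono hsub).intervalIntegrable)
        ⟨Set.Icc τ T, hnhds, hgc.aestronglyMeasurable measurableSet_Icc⟩
        ((hgc x hxI).continuousAt hnhds)
    exact hquot.mul hI.exp
  have hanti : AntitoneOn F (Set.Icc τ T) := by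
    refine antitoneOn_of_deriv_nonpos (convex_Icc τ T) hFc
      (fun x hx => ((key x hx).differentiableAt).differentiableWithinAt) ?_
    intro x hx
    rw [(key x hx).deriv]
    rw [interior_Icc] at hx
    have hxI : x ∈ Set.Icc τ T := Set.Ioo_subset_Icc_self hx
    have hhx : h x > 0 := hhpos x hxI
    have hSpos : Real.sqrt (h x) > 0 := Real.sqrt_pos.2 hhx
    have hsq : Real.sqrt (h x) ^ 2 = h x := Real.sq_sqrt hhx.le
    have ht0 : x + t0 > 0 := (hpos x hxI).1
    have hEpos : Real.exp (I x) > 0 := Real.exp_pos _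
    have heq : (Y' x * Real.sqrt (h x) -
            Y x * ((-(2 / (x + t0)) * (h x - h_bl x)) / (2 * Real.sqrt (h x)))) /
          (Real.sqrt (h x)) ^ 2 * Real.exp (I x)
          + Y x / Real.sqrt (h x) * (Real.exp (I x) * g x)
        = (Real.exp (I x) / Real.sqrt (h x)) *
            (Y' x + (Y x / (x + t0)) * (1 - h_bl x / h x) + g x * Y x) := by
      have hVne : V x ≠ 0 := (hVpos x hxI).ne'
      rw [hgdef]
      field_simp
      linear_combination (Y x * h_bl x * V x - h x * Y x * V x) * hsq
    rw [heq]
    exact mul_nonpos_of_nonneg_of_nonpos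
      (le_of_lt (div_pos hEpos hSpos)) (hineq x hxI)
  intro t ht
  have hτmem : τ ∈ Set.Icc τ T := Set.left_mem_Icc.2 hτT
  have hFle : F t ≤ F τ := hanti hτmem ht ht.1
  have hFτ : F τ = Y τ / Real.sqrt (h τ) := by
    simp [hFdef, hIdef, intervalIntegral.integral_same]
  have hYt : Y t / Real.sqrt (h t) = F t * Real.exp (-I t) := by
    rw [hFdef]
    rw [mul_assoc, ← Real.exp_add]
    simp
  rw [hYt]
  have := mul_le_mul_of_nonneg_right hFle (Real.exp_nonneg (-I t))
  rw [hFτ] at this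
  exact this
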